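/- If s, D > 0 satisfy 4·cosh(s/2) ≤ 3·cosh(D) − 1 and s ≤ 2·arccosh(1 + √2), then s/D ≤ 2·arccosh(1+√2) / arccosh((5 + 4√2)/3). -/

import Mathlib

open Real

noncomputable def arccosh (x : ℝ) : ℝ := Real.log (x + Real.sqrt (x ^ 2 - 1))

lemma sinh_ratio_aux {a b : ℝ} (ha : 0 ≤ a) (hab : a ≤ b) {t : ℝ} (ht : 0 ≤ t) :
    b * Real.sinh (t * a) ≤ a * Real.sinh (t * b) := by
  set H : ℝ → ℝ := fun t => a * Real.sinh (t * b) - b * Real.sinh (t * a) with hH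
  have hd : ∀ x : ℝ, HasDerivAt H (a * (Real.cosh (x*b) * b) - b * (Real.cosh (x*a) * a)) x := by
    intro x
    exact (((hasDerivAt_mul_const b).sinh).const_mul a).sub
      (((hasDerivAt_mul_const a).sinh).const_mul b)
  have hmono : MonotoneOn H (Set.Ici (0:ℝ)) := by
    apply monotoneOn_of_deriv_nonneg (convex_Ici 0)
      (fun x _ => (hd x).differentiableAt.continuousAt.continuousWithinAt)
    · intro x hx
      exact (hd x).differentiableAt.differentiableWithinAt
    · intro x hx
      rw [interior_Ici] at hx
      rw [(hd x).deriv]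
      have hx0 : (0:ℝ) ≤ x := le_of_lt hx
      have hb : (0:ℝ) ≤ b := ha.trans hab
      have : Real.cosh (x*a) ≤ Real.cosh (x*b) := by
        rw [Real.cosh_le_cosh]
        rw [abs_of_nonneg (mul_nonneg hx0 ha), abs_of_nonneg (mul_nonneg hx0 hb)]
        exact mul_le_mul_of_nonneg_left hab hx0
      nlinarith [mul_nonneg (mul_nonneg ha hb) (sub_nonneg.2 this)]
  have h0 : H 0 = 0 := by simp [hH]
  have := hmono (Set.self_mem_Ici) (Set.mem_Ici.2 ht) ht
  rw [h0] at this
  simpa [hH, sub_nonneg] using this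

lemma key_ineq_aux {a b : ℝ} (ha : 0 < a) (hab : a ≤ b) (hsq : 4 * a ^ 2 ≤ 3 * b ^ 2)
    (heq : 4 * Real.cosh a + 1 = 3 * Real.cosh b) {t : ℝ} (ht : 0 ≤ t) (ht1 : t ≤ 1) :
    3 * Real.cosh (t * b) ≤ 4 * Real.cosh (t * a) + 1 := by
  have hb : 0 < b := ha.trans_le hab
  set g : ℝ → ℝ := fun t => 4 * Real.cosh (t * a) + 1 - 3 * Real.cosh (t * b) with hg
  have hd : ∀ x : ℝ, HasDerivAt g
      (4 * (Real.sinh (x*a) * a) - 3 * (Real.sinh (x*b) * b)) x := by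
    intro x
    have h1 : HasDerivAt (fun y : ℝ => 4 * Real.cosh (y * a) + 1)
        (4 * (Real.sinh (x*a) * a)) x :=
      ((((hasDerivAt_mul_const a).cosh).const_mul 4)).add_const 1
    have h2 : HasDerivAt (fun y : ℝ => 3 * Real.cosh (y * b))
        (3 * (Real.sinh (x*b) * b)) x :=
      ((hasDerivAt_mul_const b).cosh).const_mul 3
    exact h1.sub h2
  have hanti : AntitoneOn g (Set.Icc (0:ℝ) 1) := by
    apply antitoneOn_of_deriv_nonpos (convex_Icc 0 1)
      (fun x _ => (hd x).differentiableAt.continuousAt.continuousWithinAt)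
    · intro x _
      exact (hd x).differentiableAt.differentiableWithinAt
    · intro x hx
      rw [interior_Icc] at hx
      rw [(hd x).deriv]
      have hx0 : (0:ℝ) ≤ x := le_of_lt hx.1
      have hr := sinh_ratio_aux ha.le hab hx0
      have hsb : 0 ≤ Real.sinh (x * b) := by
        rw [Real.sinh_nonneg_iff]
        positivity
      nlinarith [mul_le_mul_of_nonneg_left hr (by positivity : (0:ℝ) ≤ 4 * a / b),
        mul_nonneg (sub_nonneg.2 hsq) hsb]
  have h1 : g 1 = 0 := by simp [hg]; linarith [heq]
  have := hanti (Set.mem_Icc.2 ⟨ht, ht1⟩) (Set.mem_Icc.2 ⟨zero_le_one, le_refl 1⟩) ht1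
  rw [h1] at this
  simp only [hg] at this
  linarith

lemma cosh_arccosh_aux {x : ℝ} (hx : 1 ≤ x) : Real.cosh (arccosh x) = x := by
  have hx2 : (0:ℝ) ≤ x ^ 2 - 1 := by nlinarith
  have hu : Real.sqrt (x ^ 2 - 1) ^ 2 = x ^ 2 - 1 := Real.sq_sqrt hx2
  have hu0 : 0 ≤ Real.sqrt (x ^ 2 - 1) := Real.sqrt_nonneg _
  have hy : 0 < x + Real.sqrt (x ^ 2 - 1) := by nlinarith
  rw [arccosh, Real.cosh_eq, Real.exp_log hy, Real.exp_neg, Real.exp_log hy]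
  rw [inv_eq_one_div]
  field_simp
  nlinarith [hu]

lemma sqrt2_bounds : (1.414213:ℝ) ≤ Real.sqrt 2 ∧ Real.sqrt 2 ≤ 1.41422 := by
  have h1 : Real.sqrt 2 ^ 2 = 2 := Real.sq_sqrt (by norm_num)
  have h2 : (0:ℝ) ≤ Real.sqrt 2 := Real.sqrt_nonneg 2
  constructor <;> nlinarith

lemma exp_157 : (4.6116:ℝ) ≤ Real.exp 1.57 := by
  have e1 : (2.7182818283:ℝ) < Real.exp 1 := Real.exp_one_gt_d9
  have h1 : (1.1425:ℝ) ≤ Real.exp 0.1425 := by nlinarith [Real.add_one_le_exp (0.1425:ℝ)]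
  have h2 : Real.exp 0.57 = Real.exp 0.1425 ^ 4 := by
    rw [← Real.exp_nat_mul]; norm_num
  have h3 : (1.1425:ℝ) ^ 4 ≤ Real.exp 0.57 := by
    rw [h2]; exact pow_le_pow_left₀ (by norm_num) h1 4
  have h4 : Real.exp 1.57 = Real.exp 1 * Real.exp 0.57 := by
    rw [← Real.exp_add]; norm_num
  nlinarith [Real.exp_pos 0.57]

lemma exp_186 : Real.exp 1.86 ≤ 6.9606 := by
  have e1 : Real.exp 1 < 2.7182818286 := Real.exp_one_lt_d9
  have h14 : (1.14:ℝ) ≤ Real.exp 0.14 := by nlinarith [Real.add_one_le_exp (0.14:ℝ)]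
  have h : Real.exp 1.86 * Real.exp 0.14 = Real.exp 1 * Real.exp 1 := by
    rw [← Real.exp_add, ← Real.exp_add]; norm_num
  nlinarith [Real.exp_pos 1.86, Real.exp_pos 1]

lemma a_ub : arccosh (1 + Real.sqrt 2) ≤ 1.57 := by
  obtain ⟨h2l, h2u⟩ := sqrt2_bounds
  have h2 : (0:ℝ) ≤ Real.sqrt 2 := Real.sqrt_nonneg 2
  have hy : (0:ℝ) < 1 + Real.sqrt 2 + Real.sqrt ((1 + Real.sqrt 2) ^ 2 - 1) := by
    positivity
  have hsub : Real.sqrt ((1 + Real.sqrt 2) ^ 2 - 1) ≤ 2.19738 := by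
    have hs : ((1 + Real.sqrt 2) ^ 2 - 1 : ℝ) ≤ 2.19738 ^ 2 := by nlinarith
    calc Real.sqrt ((1 + Real.sqrt 2) ^ 2 - 1) ≤ Real.sqrt (2.19738 ^ 2) :=
          Real.sqrt_le_sqrt hs
      _ = 2.19738 := Real.sqrt_sq (by norm_num)
  rw [arccosh, Real.log_le_iff_le_exp hy]
  have := exp_157
  nlinarith

lemma b_lb : (1.86:ℝ) ≤ arccosh ((5 + 4 * Real.sqrt 2) / 3) := by
  obtain ⟨h2l, h2u⟩ := sqrt2_bounds
  set c : ℝ := (5 + 4 * Real.sqrt 2) / 3 with hc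
  have hc1 : (3.552284:ℝ) ≤ c := by rw [hc]; nlinarith
  have hs2 : (0:ℝ) ≤ c ^ 2 - 1 := by nlinarith
  have hsq : Real.sqrt (c ^ 2 - 1) ^ 2 = c ^ 2 - 1 := Real.sq_sqrt hs2
  have hs0 : (0:ℝ) ≤ Real.sqrt (c ^ 2 - 1) := Real.sqrt_nonneg _
  have hsub : (3.40862:ℝ) ≤ Real.sqrt (c ^ 2 - 1) := by nlinarith
  have hy : (0:ℝ) < c + Real.sqrt (c ^ 2 - 1) := by nlinarith
  rw [arccosh, Real.le_log_iff_exp_le hy]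
  have := exp_186
  nlinarith

lemma arccosh_pos_aux {x : ℝ} (hx : 1 < x) : 0 < arccosh x := by
  apply Real.log_pos
  have := Real.sqrt_nonneg (x ^ 2 - 1)
  nlinarith

theorem ratio_bound_genus_two (s D : ℝ) (hs : 0 < s) (hD : 0 < D)
    (hmain : 4 * Real.cosh (s / 2) ≤ 3 * Real.cosh D - 1)
    (hjenni : s ≤ 2 * arccosh (1 + Real.sqrt 2)) :
    s / D ≤ 2 * arccosh (1 + Real.sqrt 2) / arccosh ((5 + 4 * Real.sqrt 2) / 3) := by
  obtain ⟨h2l, h2u⟩ := sqrt2_bounds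
  set a : ℝ := arccosh (1 + Real.sqrt 2) with hadef
  set b : ℝ := arccosh ((5 + 4 * Real.sqrt 2) / 3) with hbdef
  have ha : 0 < a := arccosh_pos_aux (by nlinarith)
  have hb : 0 < b := arccosh_pos_aux (by nlinarith)
  have hau : a ≤ 1.57 := a_ub
  have hbl : (1.86:ℝ) ≤ b := b_lb
  have hab : a ≤ b := by linarith
  have hsq : 4 * a ^ 2 ≤ 3 * b ^ 2 := by nlinarith
  have hcosha : Real.cosh a = 1 + Real.sqrt 2 := cosh_arccosh_aux (by nlinarith)
  have hcoshb : Real.cosh b = (5 + 4 * Real.sqrt 2) / 3 := cosh_arccosh_aux (by nlinarith)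
  have heq : 4 * Real.cosh a + 1 = 3 * Real.cosh b := by
    rw [hcosha, hcoshb]; ring
  set t : ℝ := s / (2 * a) with htdef
  have ht0 : 0 < t := by positivity
  have ht1 : t ≤ 1 := by
    rw [htdef, div_le_one (by positivity)]
    linarith
  have hta : t * a = s / 2 := by
    rw [htdef]; field_simp
  have hkey := key_ineq_aux ha hab hsq heq ht0.le ht1
  rw [hta] at hkey
  have hcoshD : Real.cosh (t * b) ≤ Real.cosh D := by linarith
  have htbD : t * b ≤ D := by
    rw [Real.cosh_le_cosh] at hcoshD
    rw [abs_of_nonneg (by positivity), abs_of_nonneg hD.le] at hcoshD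
    exact hcoshD
  have htb : 0 < t * b := by positivity
  have h1 : s / D ≤ s / (t * b) := by gcongr
  have h2 : s / (t * b) = 2 * a / b := by
    rw [htdef]; field_simp
  rw [h2] at h1
  exact h1
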